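/- Let H be a real or complex Hilbert space and q ≥ 2. There exists C_q > 0 such that for all u, z ∈ H, | ‖u + z‖^q − ‖u‖^q − q ‖u‖^{q−2} Re⟨u, z⟩ | ≤ C_q ( ‖u‖^{q−2} ‖z‖^2 + ‖z‖^q ). -/

import Mathlib

set_option maxHeartbeats 1000000
open Real

lemma sq_rpow_half (t : ℝ) (ht : 0 ≤ t) (α : ℝ) : (t^2)^(α/2) = t^α := by
  rw [← Real.rpow_natCast t 2, ← Real.rpow_mul ht, show (2:ℕ)*(α/2) = α by push_cast; ring]

lemma slope_rpow {a b : ℝ} (ha : 0 < a) (hab : a < b) (α : ℝ) :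
    ∃ c, a < c ∧ c < b ∧ b ^ α - a ^ α = α * c ^ (α - 1) * (b - a) := by
  obtain ⟨c, hc, hc'⟩ := exists_hasDerivAt_eq_slope (fun t => t ^ α)
    (fun t => α * t ^ (α - 1)) hab
    (fun t ht => (Real.continuousAt_rpow_const t α
      (Or.inl (ne_of_gt (lt_of_lt_of_le ha ht.1)))).continuousWithinAt)
    (fun t ht => Real.hasDerivAt_rpow_const (Or.inl (ne_of_gt (ha.trans ht.1))))
  refine ⟨c, hc.1, hc.2, ?_⟩
  have hba : b - a ≠ 0 := by linarith [hc.1, hc.2]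
  have := (div_eq_iff hba).mp hc'.symm
  linarith [this]

lemma pow_interval_bound {p y d : ℝ} (hp : 1 ≤ p) (hy : 0 < y)
    (hd1 : y/2 ≤ d) (hd2 : d ≤ 3*y/2) : d ^ (p-2) ≤ 2 ^ p * y ^ (p-2) := by
  rcases le_or_gt 2 p with h2 | h2
  · calc d ^ (p-2) ≤ (3*y/2) ^ (p-2) := by
          apply Real.rpow_le_rpow (by linarith) hd2 (by linarith)
      _ = (3/2) ^ (p-2) * y ^ (p-2) := by
          rw [← Real.mul_rpow (by norm_num) hy.le]; ring_nf
      _ ≤ 2 ^ p * y ^ (p-2) := by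
          apply mul_le_mul_of_nonneg_right _ (Real.rpow_nonneg hy.le _)
          calc (3/2:ℝ) ^ (p-2) ≤ 2 ^ (p-2) :=
                Real.rpow_le_rpow (by norm_num) (by norm_num) (by linarith)
            _ ≤ 2 ^ p := Real.rpow_le_rpow_of_exponent_le (by norm_num) (by linarith)
  · calc d ^ (p-2) ≤ (y/2) ^ (p-2) :=
          Real.rpow_le_rpow_of_nonpos (by linarith) hd1 (by linarith)
      _ = y ^ (p-2) / 2 ^ (p-2) := Real.div_rpow hy.le (by norm_num : (0:ℝ) ≤ 2) _
      _ = 2 ^ (2-p) * y ^ (p-2) := by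
          rw [show (2-p) = -(p-2) by ring, Real.rpow_neg (by norm_num)]; ring
      _ ≤ 2 ^ p * y ^ (p-2) := by
          apply mul_le_mul_of_nonneg_right _ (Real.rpow_nonneg hy.le _)
          exact Real.rpow_le_rpow_of_exponent_le (by norm_num) (by linarith)

lemma mvt2 {p : ℝ} (hp : 1 ≤ p) {x y : ℝ} (hy : 0 < y) (hxy : |x - y| ≤ y / 2) :
    |x ^ p - y ^ p - p * y ^ (p - 1) * (x - y)| ≤
      p * (p - 1) * 2 ^ p * y ^ (p - 2) * (x - y) ^ 2 := by
  have hab := abs_le.mp hxy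
  have hx0 : 0 < x := by linarith [hab.1]
  have hx32 : x ≤ 3 * y / 2 := by linarith [hab.2]
  have hpp : (0:ℝ) ≤ p * (p - 1) := mul_nonneg (by linarith) (by linarith)
  have h2p : (0:ℝ) ≤ 2 ^ p * y ^ (p - 2) :=
    mul_nonneg (Real.rpow_nonneg (by norm_num) _) (Real.rpow_nonneg hy.le _)
  rcases lt_trichotomy x y with h | h | h
  · obtain ⟨c, hc1, hc2, hc3⟩ := slope_rpow hx0 h p
    obtain ⟨d, hd1, hd2, hd3⟩ := slope_rpow (hx0.trans hc1) hc2 (p - 1)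
    have hdb : d ^ (p - 2) ≤ 2 ^ p * y ^ (p - 2) :=
      pow_interval_bound hp hy (by linarith) (by linarith)
    have hd0 : (0:ℝ) ≤ d ^ (p - 2) := Real.rpow_nonneg (by linarith) _
    have hexpr : x ^ p - y ^ p - p * y ^ (p - 1) * (x - y) =
        p * (p - 1) * d ^ (p - 1 - 1) * (y - c) * (y - x) := by
      linear_combination (-1) * hc3 + p * (y - x) * hd3
    rw [show p - 1 - 1 = p - 2 by ring] at hexpr
    rw [hexpr, abs_of_nonneg (mul_nonneg (mul_nonneg (mul_nonneg hpp hd0)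
      (by linarith)) (by linarith))]
    have h5 : (y - c) * (y - x) ≤ (x - y) ^ 2 := by nlinarith
    have key : d ^ (p - 2) * ((y - c) * (y - x)) ≤ (2 ^ p * y ^ (p - 2)) * ((x - y) ^ 2) :=
      mul_le_mul hdb h5 (mul_nonneg (by linarith) (by linarith)) h2p
    calc p * (p - 1) * d ^ (p - 2) * (y - c) * (y - x)
        = p * (p - 1) * (d ^ (p - 2) * ((y - c) * (y - x))) := by ring
      _ ≤ p * (p - 1) * ((2 ^ p * y ^ (p - 2)) * ((x - y) ^ 2)) :=
          mul_le_mul_of_nonneg_left key hpp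
      _ = p * (p - 1) * 2 ^ p * y ^ (p - 2) * (x - y) ^ 2 := by ring
  · simp [h]
  · obtain ⟨c, hc1, hc2, hc3⟩ := slope_rpow hy h p
    obtain ⟨d, hd1, hd2, hd3⟩ := slope_rpow hy hc1 (p - 1)
    have hdb : d ^ (p - 2) ≤ 2 ^ p * y ^ (p - 2) :=
      pow_interval_bound hp hy (by linarith) (by linarith)
    have hd0 : (0:ℝ) ≤ d ^ (p - 2) := Real.rpow_nonneg (by linarith) _
    have hexpr : x ^ p - y ^ p - p * y ^ (p - 1) * (x - y) =
        p * (p - 1) * d ^ (p - 1 - 1) * (c - y) * (x - y) := by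
      linear_combination hc3 + p * (x - y) * hd3
    rw [show p - 1 - 1 = p - 2 by ring] at hexpr
    rw [hexpr, abs_of_nonneg (mul_nonneg (mul_nonneg (mul_nonneg hpp hd0)
      (by linarith)) (by linarith))]
    have h5 : (c - y) * (x - y) ≤ (x - y) ^ 2 := by nlinarith
    have key : d ^ (p - 2) * ((c - y) * (x - y)) ≤ (2 ^ p * y ^ (p - 2)) * ((x - y) ^ 2) :=
      mul_le_mul hdb h5 (mul_nonneg (by linarith) (by linarith)) h2p
    calc p * (p - 1) * d ^ (p - 2) * (c - y) * (x - y)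
        = p * (p - 1) * (d ^ (p - 2) * ((c - y) * (x - y))) := by ring
      _ ≤ p * (p - 1) * ((2 ^ p * y ^ (p - 2)) * ((x - y) ^ 2)) :=
          mul_le_mul_of_nonneg_left key hpp
      _ = p * (p - 1) * 2 ^ p * y ^ (p - 2) * (x - y) ^ 2 := by ring

lemma core (q : ℝ) (hq : 2 ≤ q) (N n s r : ℝ) (hN0 : 0 ≤ N) (hn0 : 0 ≤ n) (hs0 : 0 ≤ s)
    (hN2 : N^2 = n^2 + 2*r + s^2) (hr : |r| ≤ n*s) (hNa : N ≤ n + s) :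
    |N^q - n^q - q*n^(q-2)*r| ≤
      (5*(q/2)*(q/2-1)*2^(q/2) + q + 6^q + 5^q + q*5^q + 1) * (n^(q-2)*s^2 + s^q) := by
  have hp : (1:ℝ) ≤ q/2 := by linarith
  have hK1 : (0:ℝ) ≤ (q/2)*(q/2-1)*2^(q/2) :=
    mul_nonneg (mul_nonneg (by linarith) (by linarith)) (Real.rpow_nonneg (by norm_num) _)
  have hsq0 : (0:ℝ) ≤ s^q := Real.rpow_nonneg hs0 _
  have hnq2 : (0:ℝ) ≤ n^(q-2) := Real.rpow_nonneg hn0 _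
  have ht0 : (0:ℝ) ≤ n^(q-2)*s^2 := mul_nonneg hnq2 (sq_nonneg s)
  have h6q : (0:ℝ) ≤ 6^q := Real.rpow_nonneg (by norm_num) _
  have h5q : (0:ℝ) ≤ 5^q := Real.rpow_nonneg (by norm_num) _
  have hr' := abs_le.mp hr
  by_cases hcase : s ≤ n/5 ∧ n ≠ 0
  · obtain ⟨hs5, hnne⟩ := hcase
    have hn1 : 0 < n := hn0.lt_of_ne (Ne.symm hnne)
    have hd : N^2 - n^2 = 2*r + s^2 := by rw [hN2]; ring
    have hss : s^2 ≤ n*s/5 := by nlinarith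
    have hxy : |N^2 - n^2| ≤ n^2/2 := by
      rw [hd, abs_le]; constructor <;> nlinarith
    have key := mvt2 hp (show (0:ℝ) < n^2 by positivity) hxy
    have e3 : ((n:ℝ)^2)^(q/2-1) = n^(q-2) := by
      rw [show q/2-1 = (q-2)/2 by ring]; exact sq_rpow_half n hn0 (q-2)
    have e4 : ((n:ℝ)^2)^(q/2-2) = n^(q-4) := by
      rw [show q/2-2 = (q-4)/2 by ring]; exact sq_rpow_half n hn0 (q-4)
    rw [sq_rpow_half N hN0 q, sq_rpow_half n hn0 q, e3, e4] at key
    have hnm : n^(q-4) * n^2 = n^(q-2) := by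
      rw [← Real.rpow_natCast n 2, ← Real.rpow_add hn1]; congr 1; push_cast; ring
    have hsqb : (N^2 - n^2)^2 ≤ 5*(n^2*s^2) := by
      rw [hd]
      nlinarith [mul_nonneg (show (0:ℝ) ≤ 11/5*(n*s) - (2*r+s^2) by linarith [hr'.2, hss])
        (show (0:ℝ) ≤ 11/5*(n*s) + (2*r+s^2) by linarith [hr'.1, sq_nonneg s]),
        mul_nonneg (mul_nonneg hn1.le hn1.le) (sq_nonneg s), sq_nonneg (n*s)]
    have hnq4 : (0:ℝ) ≤ n^(q-4) := Real.rpow_nonneg hn0 _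
    have hid : N^q - n^q - q*n^(q-2)*r =
        (N^q - n^q - q/2*n^(q-2)*(N^2 - n^2)) + (q/2)*n^(q-2)*s^2 := by
      rw [hd]; ring
    calc |N^q - n^q - q*n^(q-2)*r|
        ≤ |N^q - n^q - q/2*n^(q-2)*(N^2 - n^2)| + |(q/2)*n^(q-2)*s^2| := by
          rw [hid]; exact abs_add_le _ _
      _ ≤ (q/2)*(q/2-1)*2^(q/2)*n^(q-4)*(N^2-n^2)^2 + (q/2)*n^(q-2)*s^2 := by
          refine add_le_add key (le_of_eq (abs_of_nonneg ?_))
          exact mul_nonneg (mul_nonneg (by linarith) hnq2) (sq_nonneg s)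
      _ ≤ (q/2)*(q/2-1)*2^(q/2)*n^(q-4)*(5*(n^2*s^2)) + (q/2)*n^(q-2)*s^2 := by
          refine add_le_add_left (mul_le_mul_of_nonneg_left hsqb (mul_nonneg hK1 hnq4)) _
      _ = (5*(q/2)*(q/2-1)*2^(q/2) + q/2) * (n^(q-2)*s^2) := by
          rw [show (q/2)*(q/2-1)*2^(q/2)*n^(q-4)*(5*(n^2*s^2))
            = 5*((q/2)*(q/2-1)*2^(q/2))*((n^(q-4)*n^2)*s^2) by ring, hnm]; ring
      _ ≤ (5*(q/2)*(q/2-1)*2^(q/2) + q + 6^q + 5^q + q*5^q + 1) * (n^(q-2)*s^2 + s^q) := by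
          nlinarith [mul_nonneg hK1 ht0, mul_nonneg hK1 hsq0, mul_nonneg h6q ht0,
            mul_nonneg h5q ht0, mul_nonneg h6q hsq0, mul_nonneg h5q hsq0,
            mul_nonneg (by linarith : (0:ℝ) ≤ q) ht0,
            mul_nonneg (by linarith : (0:ℝ) ≤ q) hsq0,
            mul_nonneg (mul_nonneg (by linarith : (0:ℝ) ≤ q) h5q) ht0,
            mul_nonneg (mul_nonneg (by linarith : (0:ℝ) ≤ q) h5q) hsq0, ht0, hsq0]
  · have hn5 : n ≤ 5*s := by
      rcases not_and_or.mp hcase with h | h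
      · linarith [not_le.mp h]
      · simp only [not_not] at h; rw [h]; positivity
    rcases eq_or_lt_of_le hs0 with hs | hs
    · have hsz : s = 0 := hs.symm
      have hnz : n = 0 := le_antisymm (by linarith) hn0
      have hNz : N = 0 := le_antisymm (by linarith) hN0
      have hrz : r = 0 := by
        rw [hnz, hsz] at hr; simpa using abs_nonpos_iff.mp (by simpa using hr)
      rw [hsz, hnz, hNz, hrz]
      simp [Real.zero_rpow (show q ≠ 0 by linarith)]
    · have h5s : (0:ℝ) < 5*s := by linarith
      have b1 : N^q ≤ 6^q * s^q := by
        rw [← Real.mul_rpow (by norm_num) hs0]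
        exact Real.rpow_le_rpow hN0 (by linarith) (by linarith)
      have b2 : n^q ≤ 5^q * s^q := by
        rw [← Real.mul_rpow (by norm_num) hs0]
        exact Real.rpow_le_rpow hn0 (by linarith) (by linarith)
      have b3 : n^(q-2) * |r| ≤ 5^q * s^q := by
        have h1 : n^(q-2) ≤ (5*s)^(q-2) := Real.rpow_le_rpow hn0 hn5 (by linarith)
        have h2 : |r| ≤ (5*s)*s := hr.trans (by nlinarith)
        calc n^(q-2) * |r| ≤ (5*s)^(q-2) * ((5*s)*s) :=
              mul_le_mul h1 h2 (abs_nonneg r) (Real.rpow_nonneg h5s.le _)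
          _ = ((5*s)^(q-2) * (5*s)) * s := by ring
          _ = (5*s)^(q-1) * s := by
              rw [← Real.rpow_add_one (ne_of_gt h5s), show q-2+1 = q-1 by ring]
          _ = 5^(q-1) * (s^(q-1) * s) := by
              rw [Real.mul_rpow (by norm_num) hs0]; ring
          _ = 5^(q-1) * s^q := by
              rw [← Real.rpow_add_one (ne_of_gt hs), show q-1+1 = q by ring]
          _ ≤ 5^q * s^q := by
              refine mul_le_mul_of_nonneg_right ?_ hsq0
              exact Real.rpow_le_rpow_of_exponent_le (by norm_num) (by linarith)
      have hNq : (0:ℝ) ≤ N^q := Real.rpow_nonneg hN0 _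
      have hnq : (0:ℝ) ≤ n^q := Real.rpow_nonneg hn0 _
      calc |N^q - n^q - q*n^(q-2)*r|
          ≤ N^q + n^q + q*(n^(q-2)*|r|) := by
            have h3 : |q*n^(q-2)*r| = q*(n^(q-2)*|r|) := by
              rw [abs_mul, abs_mul, abs_of_nonneg (by linarith : (0:ℝ) ≤ q),
                abs_of_nonneg hnq2]; ring
            calc |N^q - n^q - q*n^(q-2)*r| ≤ |N^q - n^q| + |q*n^(q-2)*r| := abs_sub _ _
              _ ≤ (|N^q| + |n^q|) + |q*n^(q-2)*r| := by
                  exact add_le_add_left (abs_sub _ _) _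
              _ = N^q + n^q + q*(n^(q-2)*|r|) := by
                  rw [abs_of_nonneg hNq, abs_of_nonneg hnq, h3]
        _ ≤ 6^q*s^q + 5^q*s^q + q*(5^q*s^q) := by
            refine add_le_add (add_le_add b1 b2) (mul_le_mul_of_nonneg_left b3 (by linarith))
        _ ≤ (5*(q/2)*(q/2-1)*2^(q/2) + q + 6^q + 5^q + q*5^q + 1) * (n^(q-2)*s^2 + s^q) := by
            nlinarith [mul_nonneg hK1 hsq0, mul_nonneg hK1 ht0, mul_nonneg h6q ht0,
              mul_nonneg h5q ht0, mul_nonneg (mul_nonneg (by linarith : (0:ℝ) ≤ q) h5q) ht0,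
              mul_nonneg (by linarith : (0:ℝ) ≤ q) ht0]

theorem stmt_11 (𝕜 : Type) [RCLike 𝕜] (H : Type) [NormedAddCommGroup H]
    [InnerProductSpace 𝕜 H] (q : ℝ) (hq : 2 ≤ q) :
    ∃ C : ℝ, 0 < C ∧ ∀ u z : H,
      |‖u + z‖ ^ q - ‖u‖ ^ q - q * ‖u‖ ^ (q - 2) * RCLike.re (inner 𝕜 u z : 𝕜)| ≤
        C * (‖u‖ ^ (q - 2) * ‖z‖ ^ 2 + ‖z‖ ^ q) := by
  refine ⟨5*(q/2)*(q/2-1)*2^(q/2) + q + 6^q + 5^q + q*5^q + 1, ?_, fun u z => ?_⟩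
  · have hK1 : (0:ℝ) ≤ 5*(q/2)*(q/2-1)*2^(q/2) :=
      mul_nonneg (mul_nonneg (by linarith) (by linarith)) (Real.rpow_nonneg (by norm_num) _)
    have h6q : (0:ℝ) ≤ 6^q := Real.rpow_nonneg (by norm_num) _
    have h5q : (0:ℝ) ≤ 5^q := Real.rpow_nonneg (by norm_num) _
    nlinarith [mul_nonneg (show (0:ℝ) ≤ q by linarith) h5q]
  · have hN2 : ‖u + z‖^2 = ‖u‖^2 + 2*(RCLike.re (inner 𝕜 u z : 𝕜)) + ‖z‖^2 :=
      norm_add_sq (𝕜 := 𝕜) u z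
    have hr : |RCLike.re (inner 𝕜 u z : 𝕜)| ≤ ‖u‖*‖z‖ :=
      (RCLike.abs_re_le_norm _).trans (norm_inner_le_norm u z)
    exact core q hq _ _ _ _ (norm_nonneg _) (norm_nonneg _) (norm_nonneg _) hN2 hr
      (norm_add_le u z)
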